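/- Let A be a symmetric matrix with nonzero diagonal and sparsity graph G, and let H be the sparsity graph of A². For any vertex v of G, the neighborhood of v in H equals the neighborhood of v in the sparsity graph of X_v², where X_v is the principal submatrix of A indexed by the closed neighborhood of v in H, provided no cancellation occurs (all products of nonzero entries contributing to an entry of A² have the same sign). -/
import Mathlib


/-- Lemma `neighb`: Let `A` be symmetric with nonzero diagonal and
nonnegative entries (no cancellation), `H` the sparsity graph of `A²`, `S` the closed
neighborhood of `v` in `H`, and `X_v` the principal submatrix of `A` indexed by `S`.
Then the neighborhood of `v` in `H` equals the neighborhood of `v` in the sparsity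
graph of `X_v²`. -/
theorem stmt_3 {n : ℕ} (A : Matrix (Fin n) (Fin n) ℝ) (hA : A.IsSymm)
    (hdiag : ∀ i, A i i ≠ 0) (hnonneg : ∀ i j, 0 ≤ A i j) (v : Fin n)
    (S : Finset (Fin n)) (hS : ∀ u, u ∈ S ↔ u = v ∨ (A * A) v u ≠ 0)
    (hv : v ∈ S) :
    ∀ w : Fin n, (A * A) v w ≠ 0 ↔
      ∃ hw : w ∈ S,
        (((A.submatrix (Subtype.val : {x // x ∈ S} → Fin n) Subtype.val) *
          (A.submatrix (Subtype.val : {x // x ∈ S} → Fin n) Subtype.val) :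
          Matrix {x // x ∈ S} {x // x ∈ S} ℝ))
          ⟨v, hv⟩ ⟨w, hw⟩ ≠ 0 := by
  intro w
  simp only [Matrix.mul_apply, Matrix.submatrix_apply]
  constructor
  · intro h
    have hw : w ∈ S := (hS w).2 (Or.inr (by simpa [Matrix.mul_apply] using h))
    -- find a witness k with A v k * A k w ≠ 0
    have hex : ∃ k ∈ (Finset.univ : Finset (Fin n)), A v k * A k w ≠ 0 := by
      by_contra hc
      push_neg at hc
      exact h (Finset.sum_eq_zero fun k hk => hc k hk)
    obtain ⟨k, -, hk⟩ := hex
    have hvk : 0 < A v k := lt_of_le_of_ne (hnonneg v k)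
      (fun h' => hk (by rw [← h', zero_mul]))
    have hkw : 0 < A k w := lt_of_le_of_ne (hnonneg k w)
      (fun h' => hk (by rw [← h', mul_zero]))
    have hkS : k ∈ S := by
      refine (hS k).2 (Or.inr ?_)
      rw [Matrix.mul_apply]
      refine ne_of_gt (Finset.sum_pos' (fun j _ => mul_nonneg (hnonneg v j) (hnonneg j k)) ?_)
      exact ⟨k, Finset.mem_univ k,
        mul_pos hvk (lt_of_le_of_ne (hnonneg k k) (Ne.symm (hdiag k)))⟩
    refine ⟨hw, ne_of_gt (Finset.sum_pos'
      (fun j _ => mul_nonneg (hnonneg v j.1) (hnonneg j.1 w)) ?_)⟩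
    exact ⟨⟨k, hkS⟩, Finset.mem_univ _, mul_pos hvk hkw⟩
  · rintro ⟨hw, h⟩
    have hex : ∃ k ∈ (Finset.univ : Finset {x // x ∈ S}), A v k.1 * A k.1 w ≠ 0 := by
      by_contra hc
      push_neg at hc
      exact h (Finset.sum_eq_zero fun k hk => hc k hk)
    obtain ⟨k, -, hk⟩ := hex
    refine ne_of_gt (Finset.sum_pos'
      (fun j _ => mul_nonneg (hnonneg v j) (hnonneg j w)) ?_)
    refine ⟨k.1, Finset.mem_univ _, lt_of_le_of_ne
      (mul_nonneg (hnonneg v k.1) (hnonneg k.1 w)) (Ne.symm hk)⟩
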